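/- A quasi-stationary point process under iid non-degenerate increments cannot have a finite number n ≥ 2 of points almost surely: a quasi-stationary process has either one point or infinitely many points almost surely. -/

import Mathlib

open MeasureTheory ProbabilityTheory Real Set Filter
open scoped ENNReal

set_option linter.unusedSectionVars false
set_option linter.unnecessarySimpa false
set_option linter.unusedTactic false
set_option linter.deprecated false

noncomputable def alphaRec (ν : Measure ℝ) : ℕ → ℝ → ℝ≥0∞
  | 0 => fun _ => 0
  | (N+1) => fun b => ∫⁻ d, (if b ≤ d then 1 else alphaRec ν N (b - d)) ∂ν

noncomputable def rhoRec (ν : Measure ℝ) : ℕ → ℝ → ℝ → ℝ≥0∞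
  | 0 => fun _ _ => 1
  | (N+1) => fun u v => ∫⁻ d, (if -u < d ∧ d < v then rhoRec ν N (u + d) (v - d) else 0) ∂ν

noncomputable def psiRec (ν : Measure ℝ) (H : ℝ → ℝ≥0∞) : ℕ → ℝ → ℝ → ℝ≥0∞
  | 0 => fun t _ => H t
  | (N+1) => fun t b => ∫⁻ d, (if b ≤ d then H (t - d) else psiRec ν H N (t - d) (b - d)) ∂ν

lemma alphaRec_meas (ν : Measure ℝ) [SFinite ν] (N : ℕ) : Measurable (alphaRec ν N) := by
  induction N with
  | zero => simpa [alphaRec] using measurable_const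
  | succ N ih =>
    have : Measurable fun q : ℝ × ℝ => (if q.1 ≤ q.2 then 1 else alphaRec ν N (q.1 - q.2)) :=
      Measurable.ite (measurableSet_le measurable_fst measurable_snd) measurable_const
        (ih.comp (measurable_fst.sub measurable_snd))
    simpa [alphaRec] using this.lintegral_prod_right'

lemma rhoRec_meas (ν : Measure ℝ) [SFinite ν] (N : ℕ) :
    Measurable (fun q : ℝ × ℝ => rhoRec ν N q.1 q.2) := by
  induction N with
  | zero => simpa [rhoRec] using measurable_const
  | succ N ih =>
    have : Measurable fun q : (ℝ × ℝ) × ℝ =>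
        (if -q.1.1 < q.2 ∧ q.2 < q.1.2 then rhoRec ν N (q.1.1 + q.2) (q.1.2 - q.2) else 0) := by
      refine Measurable.ite ?_ ?_ measurable_const
      · exact (measurableSet_lt (measurable_fst.fst.neg) measurable_snd).inter
          (measurableSet_lt measurable_snd measurable_fst.snd)
      · exact ih.comp ((measurable_fst.fst.add measurable_snd).prodMk
          (measurable_fst.snd.sub measurable_snd))
    simpa [rhoRec] using this.lintegral_prod_right'

section Core
variable (ν : Measure ℝ) [IsProbabilityMeasure ν] (H : ℝ → ℝ≥0∞)

lemma psiRec_le (hHsup : ∀ t, ∫⁻ d, H (t - d) ∂ν ≤ H t) :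
    ∀ N t b, psiRec ν H N t b ≤ H t := by
  intro N
  induction N with
  | zero => intro t b; simp [psiRec]
  | succ N ih =>
    intro t b
    calc psiRec ν H (N+1) t b ≤ ∫⁻ d, H (t - d) ∂ν := by
          refine lintegral_mono fun d => ?_
          by_cases hd : b ≤ d
          · simp [psiRec, hd]
          · simpa [psiRec, hd] using ih (t - d) (b - d)
      _ ≤ H t := hHsup t

lemma psiRec_ge [SFinite ν] (hHanti : Antitone H) :
    ∀ N t b, H (t - b) * alphaRec ν N b ≤ psiRec ν H N t b := by
  intro N
  induction N with
  | zero => intro t b; simp [alphaRec, psiRec]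
  | succ N ih =>
    intro t b
    have hmeas : Measurable fun d => (if b ≤ d then (1:ℝ≥0∞) else alphaRec ν N (b - d)) :=
      Measurable.ite (measurableSet_le measurable_const measurable_id) measurable_const
        ((alphaRec_meas ν N).comp (measurable_const.sub measurable_id))
    calc H (t - b) * alphaRec ν (N+1) b
        = ∫⁻ d, H (t - b) * (if b ≤ d then 1 else alphaRec ν N (b - d)) ∂ν := by
          rw [alphaRec, lintegral_const_mul _ hmeas]
      _ ≤ psiRec ν H (N+1) t b := by
          refine lintegral_mono fun d => ?_
          by_cases hd : b ≤ d
          · simpa [psiRec, hd] using hHanti (by linarith : t - d ≤ t - b)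
          · have : H (t - b) * alphaRec ν N (b - d) ≤ psiRec ν H N (t - d) (b - d) := by
              have := ih (t - d) (b - d)
              simpa [sub_sub_cancel, show t - d - (b - d) = t - b by ring] using this
            simpa [psiRec, hd] using this
end Core

-- symmetry: alternative form of alphaRec
lemma alphaRec_alt (ν : Measure ℝ) [SFinite ν] (hsym : ν.map (fun x => -x) = ν) (N : ℕ) (b : ℝ) :
    alphaRec ν (N+1) b = ∫⁻ d, (if d ≤ -b then 1 else alphaRec ν N (b + d)) ∂ν := by
  have hmeas : Measurable fun d => (if b ≤ d then (1:ℝ≥0∞) else alphaRec ν N (b - d)) :=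
    Measurable.ite (measurableSet_le measurable_const measurable_id) measurable_const
      ((alphaRec_meas ν N).comp (measurable_const.sub measurable_id))
  have h1 : alphaRec ν (N+1) b
      = ∫⁻ d, (if b ≤ d then (1:ℝ≥0∞) else alphaRec ν N (b - d)) ∂(ν.map (fun x => -x)) := by
    rw [hsym]; rfl
  rw [h1, lintegral_map hmeas measurable_neg]
  refine lintegral_congr fun d => ?_
  have : b ≤ -d ↔ d ≤ -b := by constructor <;> intro <;> linarith
  by_cases hd : d ≤ -b
  · simp [this, hd]
  · have : ¬ b ≤ -d := by rw [this]; exact hd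
    simp [this, hd, sub_neg_eq_add]

-- exit decomposition: rho + alpha(top) + alpha(bottom) ≥ 1
lemma rho_alpha_ge (ν : Measure ℝ) [IsProbabilityMeasure ν]
    (hsym : ν.map (fun x => -x) = ν) :
    ∀ N u v, 0 < u → 0 < v →
      1 ≤ rhoRec ν N u v + alphaRec ν N v + alphaRec ν N u := by
  intro N
  induction N with
  | zero => intro u v _ _; exact le_add_right (le_add_right (by simp [rhoRec]))
  | succ N ih =>
    intro u v hu hv
    have hmeas1 : Measurable fun d => (if -u < d ∧ d < v then rhoRec ν N (u + d) (v - d) else 0) := by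
      refine Measurable.ite ?_ ?_ measurable_const
      · exact (measurableSet_lt measurable_const measurable_id).inter
          (measurableSet_lt measurable_id measurable_const)
      · exact (rhoRec_meas ν N).comp ((measurable_const.add measurable_id).prodMk
          (measurable_const.sub measurable_id))
    have hmeas2 : Measurable fun d => (if v ≤ d then (1:ℝ≥0∞) else alphaRec ν N (v - d)) :=
      Measurable.ite (measurableSet_le measurable_const measurable_id) measurable_const
        ((alphaRec_meas ν N).comp (measurable_const.sub measurable_id))
    have hmeas3 : Measurable fun d : ℝ => (if d ≤ -u then (1:ℝ≥0∞) else alphaRec ν N (u + d)) :=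
      Measurable.ite measurableSet_Iic measurable_const
        ((alphaRec_meas ν N).comp (measurable_const.add measurable_id))
    have key : ∀ d : ℝ,
        1 ≤ (if -u < d ∧ d < v then rhoRec ν N (u + d) (v - d) else 0)
          + (if v ≤ d then (1:ℝ≥0∞) else alphaRec ν N (v - d))
          + (if d ≤ -u then (1:ℝ≥0∞) else alphaRec ν N (u + d)) := by
      intro d
      by_cases h1 : v ≤ d
      · calc (1:ℝ≥0∞) ≤ (if v ≤ d then (1:ℝ≥0∞) else alphaRec ν N (v - d)) := by simp [h1]
          _ ≤ _ := le_add_right le_add_self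
      · by_cases h2 : d ≤ -u
        · calc (1:ℝ≥0∞) ≤ (if d ≤ -u then (1:ℝ≥0∞) else alphaRec ν N (u + d)) := by simp [h2]
            _ ≤ _ := le_add_self
        · have hin : -u < d ∧ d < v := ⟨lt_of_not_ge (fun hh => h2 (by linarith)), lt_of_not_ge h1⟩
          have := ih (u + d) (v - d) (by linarith [hin.1]) (by linarith [hin.2])
          simpa [hin, h1, h2] using this
    calc (1:ℝ≥0∞) = ∫⁻ _, 1 ∂ν := by simp
      _ ≤ ∫⁻ d, ((if -u < d ∧ d < v then rhoRec ν N (u + d) (v - d) else 0)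
          + (if v ≤ d then (1:ℝ≥0∞) else alphaRec ν N (v - d))
          + (if d ≤ -u then (1:ℝ≥0∞) else alphaRec ν N (u + d))) ∂ν :=
        lintegral_mono key
      _ = rhoRec ν (N+1) u v + alphaRec ν (N+1) v + alphaRec ν (N+1) u := by
        rw [lintegral_add_right _ hmeas3, lintegral_add_right _ hmeas2, alphaRec_alt ν hsym N u]
        rfl

section Block
variable (ν : Measure ℝ) [IsProbabilityMeasure ν] (ε : ℝ) (hε : 0 < ε)

-- key ENNReal arithmetic
lemma key_arith (p q : ℝ≥0∞) (hp1 : p ≤ 1) (hpq : q + p = 1) (j : ℕ) :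
    q + p * (1 - p ^ j) ≤ 1 - p ^ (j + 1) := by
  refine ENNReal.le_sub_of_add_le_left (ENNReal.pow_ne_top (lt_of_le_of_lt hp1 ENNReal.one_lt_top).ne) ?_
  have h1 : p * (1 - p ^ j) + p ^ (j + 1) = p := by
    rw [pow_succ']
    rw [← mul_add]
    rw [tsub_add_cancel_of_le (pow_le_one' hp1 j), mul_one]
  calc p ^ (j + 1) + (q + p * (1 - p ^ j)) = q + (p * (1 - p ^ j) + p ^ (j + 1)) := by ring
    _ = q + p := by rw [h1]
    _ ≤ 1 := le_of_eq hpq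

lemma rho_block (K : ℕ) :
    ∀ M : ℕ, ∀ u v : ℝ, 0 < u → 0 < v → u + v ≤ K * ε →
      rhoRec ν (M * K) u v ≤ (1 - ν (Ici ε) ^ K) ^ M := by
  set p := ν (Ici ε) with hp
  set q := ν (Iio ε) with hq
  have hp1 : p ≤ 1 := prob_le_one
  have hpq : q + p = 1 := by
    have := measure_add_measure_compl (μ := ν) (measurableSet_Iio (a := ε))
    rwa [compl_Iio, measure_univ] at this
  set c := 1 - p ^ K with hc
  intro M
  induction M with
  | zero => intro u v _ _ _; simp [rhoRec]
  | succ M ih =>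
    -- inner induction on j
    have D : ∀ j : ℕ, ∀ u v : ℝ, 0 < u → 0 < v → u + v ≤ K * ε →
        rhoRec ν (M * K + j) u v ≤ c ^ M ∧
          (v ≤ j * ε → rhoRec ν (M * K + j) u v ≤ c ^ M * (1 - p ^ j)) := by
      intro j
      induction j with
      | zero =>
        intro u v hu hv huv
        refine ⟨by simpa using ih u v hu hv huv, fun hv0 => absurd hv (by push_neg; simpa using hv0)⟩
      | succ j ihj =>
        intro u v hu hv huv
        have hstep : ∀ (bound : ℝ → ℝ≥0∞),
            (∀ d, (if -u < d ∧ d < v then rhoRec ν (M * K + j) (u + d) (v - d) else 0) ≤ bound d) →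
            rhoRec ν (M * K + (j+1)) u v ≤ ∫⁻ d, bound d ∂ν := by
          intro bound hb
          have : M * K + (j + 1) = (M * K + j) + 1 := by ring
          rw [this]
          exact lintegral_mono hb
        constructor
        · -- part (a)
          refine le_trans (hstep (fun _ => c ^ M) ?_) (by simp)
          intro d
          by_cases hd : -u < d ∧ d < v
          · simpa [hd] using (ihj (u + d) (v - d) (by linarith [hd.1]) (by linarith [hd.2])
              (by push_cast; linarith)).1
          · simp [hd]
        · -- part (b)
          intro hvj
          have hb : ∀ d, (if -u < d ∧ d < v then rhoRec ν (M * K + j) (u + d) (v - d) else 0)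
              ≤ (Iio ε).indicator (fun _ => c ^ M) d
                + (Ici ε).indicator (fun _ => c ^ M * (1 - p ^ j)) d := by
            intro d
            by_cases hd : -u < d ∧ d < v
            · have h1 : 0 < u + d := by linarith [hd.1]
              have h2 : 0 < v - d := by linarith [hd.2]
              have h3 : (u + d) + (v - d) ≤ K * ε := by push_cast at huv ⊢; linarith
              by_cases hde : d < ε
              · calc (if -u < d ∧ d < v then rhoRec ν (M * K + j) (u + d) (v - d) else 0)
                    = rhoRec ν (M * K + j) (u + d) (v - d) := by simp [hd]
                  _ ≤ c ^ M := (ihj _ _ h1 h2 h3).1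
                  _ ≤ _ := by
                    rw [indicator_of_mem (by exact hde : d ∈ Iio ε)]
                    exact le_self_add
              · have hd2 : v - d ≤ j * ε := by
                  push_cast at hvj ⊢
                  have : ε ≤ d := not_lt.mp hde
                  linarith
                calc (if -u < d ∧ d < v then rhoRec ν (M * K + j) (u + d) (v - d) else 0)
                    = rhoRec ν (M * K + j) (u + d) (v - d) := by simp [hd]
                  _ ≤ c ^ M * (1 - p ^ j) := (ihj _ _ h1 h2 h3).2 hd2
                  _ ≤ _ := by
                    rw [indicator_of_mem (by exact not_lt.mp hde : d ∈ Ici ε)]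
                    exact le_add_self
            · simp [hd]
          calc rhoRec ν (M * K + (j+1)) u v ≤ ∫⁻ d, ((Iio ε).indicator (fun _ => c ^ M) d
                + (Ici ε).indicator (fun _ => c ^ M * (1 - p ^ j)) d) ∂ν := hstep _ hb
            _ = c ^ M * q + (c ^ M * (1 - p ^ j)) * p := by
              rw [lintegral_add_left (measurable_const.indicator measurableSet_Iio),
                lintegral_indicator measurableSet_Iio,
                lintegral_indicator measurableSet_Ici, setLIntegral_const, setLIntegral_const]
            _ = c ^ M * (q + p * (1 - p ^ j)) := by ring
            _ ≤ c ^ M * (1 - p ^ (j + 1)) := by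
              exact mul_le_mul_right (key_arith p q hp1 hpq j) _
        -- end inner
    intro u v hu hv huv
    have h1 : (M + 1) * K = M * K + K := by ring
    rw [h1]
    have := (D K u v hu hv huv).2 (by
      have : v < u + v := by linarith
      calc v ≤ K * ε := le_trans this.le huv
        _ = K * ε := rfl)
    calc rhoRec ν (M * K + K) u v ≤ c ^ M * (1 - p ^ K) := this
      _ = c ^ (M + 1) := (pow_succ c M).symm
end Block

lemma core_false (ν : Measure ℝ) [IsProbabilityMeasure ν]
    (hsym : ν.map (fun x => -x) = ν)
    (ε : ℝ) (hε : 0 < ε) (hp : 0 < ν (Ici ε))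
    (H : ℝ → ℝ≥0∞) (hHanti : Antitone H)
    (hHneg : ∀ t, t < 0 → H t = 1)
    (hHsup : ∀ t, ∫⁻ d, H (t - d) ∂ν ≤ H t)
    (hH0 : Tendsto H atTop (nhds 0)) : False := by
  set p := ν (Ici ε) with hpdef
  have hp1 : p ≤ 1 := prob_le_one
  have main : ∀ t : ℝ, (1:ℝ≥0∞) / 4 ≤ H t := by
    intro t
    set a : ℝ := max t 0 + 1 with ha
    have ha0 : 0 < a := by positivity
    have hta : t - a < 0 := by
      have : t ≤ max t 0 := le_max_left _ _
      linarith
    -- choose K with a + a ≤ K * ε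
    obtain ⟨K, hK⟩ := exists_nat_ge ((a + a) / ε)
    have hKε : a + a ≤ K * ε := by
      rw [div_le_iff₀ hε] at hK
      exact hK
    -- c < 1
    have hcK : (1:ℝ≥0∞) - p ^ K < 1 :=
      ENNReal.sub_lt_self ENNReal.one_ne_top one_ne_zero (pow_ne_zero K hp.ne')
    -- choose M with c^M < 1/2
    have htend := ENNReal.tendsto_pow_atTop_nhds_zero_of_lt_one hcK
    obtain ⟨M, hM⟩ := (htend.eventually_lt_const (by norm_num : (0:ℝ≥0∞) < 1/2)).exists
    set N := M * K with hN
    have hρ : rhoRec ν N a a ≤ (1 - p ^ K) ^ M :=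
      rho_block ν ε K M a a ha0 ha0 hKε
    have h1 : 1 ≤ rhoRec ν N a a + alphaRec ν N a + alphaRec ν N a :=
      rho_alpha_ge ν hsym N a a ha0 ha0
    have hα : (1:ℝ≥0∞) / 4 ≤ alphaRec ν N a := by
      by_contra hcon
      push_neg at hcon
      have h2 : rhoRec ν N a a + alphaRec ν N a + alphaRec ν N a < 1/2 + (1/4 + 1/4) := by
        have := lt_of_le_of_lt hρ hM
        calc rhoRec ν N a a + alphaRec ν N a + alphaRec ν N a
            = rhoRec ν N a a + (alphaRec ν N a + alphaRec ν N a) := by ring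
          _ < 1/2 + (1/4 + 1/4) := by
            exact ENNReal.add_lt_add this (ENNReal.add_lt_add hcon hcon)
      have harith : (1:ℝ≥0∞)/2 + (1/4 + 1/4) = 1 := by
        rw [ENNReal.div_add_div_same, show (1:ℝ≥0∞)+1 = 2 from one_add_one_eq_two,
          show (2:ℝ≥0∞)/4 = 2*1/(2*2) by norm_num,
          ENNReal.mul_div_mul_left 1 2 two_ne_zero ENNReal.ofNat_ne_top,
          ENNReal.div_add_div_same, show (1:ℝ≥0∞)+1 = 2 from one_add_one_eq_two]
        exact ENNReal.div_self two_ne_zero ENNReal.ofNat_ne_top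
      rw [harith] at h2
      exact absurd h1 (not_le.mpr h2)
    calc (1:ℝ≥0∞) / 4 ≤ alphaRec ν N a := hα
      _ = H (t - a) * alphaRec ν N a := by rw [hHneg _ hta, one_mul]
      _ ≤ psiRec ν H N t a := psiRec_ge ν H hHanti N t a
      _ ≤ H t := psiRec_le ν H hHsup N t a
  obtain ⟨t, ht⟩ := (hH0.eventually_lt_const (by norm_num : (0:ℝ≥0∞) < 1/4)).exists
  exact absurd (main t) (not_le.mpr ht)


lemma telescope_fin (n : ℕ) (f : Fin (n + 1) → ℝ) :
    ∑ i : Fin n, (f i.castSucc - f i.succ) = f 0 - f (Fin.last n) := by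
  induction n with
  | zero => simp
  | succ n ih =>
    rw [Fin.sum_univ_castSucc]
    have h1 : ∀ i : Fin n, f i.castSucc.castSucc - f i.castSucc.succ
        = (f ∘ Fin.castSucc) i.castSucc - (f ∘ Fin.castSucc) i.succ := by
      intro i; rfl
    calc (∑ i : Fin n, (f i.castSucc.castSucc - f i.castSucc.succ))
          + (f (Fin.last n).castSucc - f (Fin.last n).succ)
        = ((f ∘ Fin.castSucc) 0 - (f ∘ Fin.castSucc) (Fin.last n))
          + (f (Fin.last n).castSucc - f (Fin.last n).succ) := by
          rw [Finset.sum_congr rfl (fun i _ => h1 i), ih (f ∘ Fin.castSucc)]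
      _ = f 0 - f (Fin.last (n + 1)) := by
          simp only [Function.comp_apply, Fin.succ_last, Fin.castSucc_zero]
          ring

/-- a quasi-stationary point process under iid non-degenerate increments
(having a density) cannot have a finite number `n ≥ 2` of points almost surely:
for a configuration of `n = m + 2` points, ordered decreasingly, invariance of the gap
law under the increment-and-reorder evolution is impossible. -/
theorem no_finite_quasiStationary_process
    {Ω : Type*} [MeasurableSpace Ω] (μ : Measure Ω) [IsProbabilityMeasure μ]
    (m : ℕ) (X h : Ω → Fin (m + 2) → ℝ)
    (hXm : Measurable X) (hhm : Measurable h)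
    (hord : ∀ᵐ ω ∂μ, Antitone (X ω))
    (hident : ∀ i : Fin (m + 2),
      Measure.map (fun ω => h ω i) μ = Measure.map (fun ω => h ω 0) μ)
    (hindep : iIndepFun (fun i ω => h ω i) μ)
    (hac : Measure.map (fun ω => h ω 0) μ ≪ MeasureTheory.volume)
    (hnondeg : ¬ ∃ c : ℝ, ∀ᵐ ω ∂μ, h ω 0 = c)
    (hXh : IndepFun X h μ)
    (Y : Ω → Fin (m + 2) → ℝ) (hYm : Measurable Y)
    (hreord : ∀ᵐ ω ∂μ, Antitone (Y ω) ∧ ∃ σ : Equiv.Perm (Fin (m + 2)),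
      ∀ i, Y ω i = X ω (σ i) + h ω (σ i))
    (hqs : Measure.map (fun ω (i : Fin (m + 1)) => Y ω i.castSucc - Y ω i.succ) μ
      = Measure.map (fun ω (i : Fin (m + 1)) => X ω i.castSucc - X ω i.succ) μ) :
    False := by
  classical
  set L : Fin (m + 2) := Fin.last (m + 1) with hLdef
  have hL0 : (0 : Fin (m + 2)) ≠ L := by
    simp only [hLdef, Fin.ne_iff_vne, Fin.val_zero, Fin.val_last]
    omega
  -- coordinate measurability
  have hX0 : Measurable fun ω => X ω 0 := (measurable_pi_apply _).comp hXm
  have hXL : Measurable fun ω => X ω L := (measurable_pi_apply _).comp hXm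
  have hY0 : Measurable fun ω => Y ω 0 := (measurable_pi_apply _).comp hYm
  have hYL : Measurable fun ω => Y ω L := (measurable_pi_apply _).comp hYm
  have hh0 : Measurable fun ω => h ω 0 := (measurable_pi_apply _).comp hhm
  have hhL : Measurable fun ω => h ω L := (measurable_pi_apply _).comp hhm
  set S : Ω → ℝ := fun ω => X ω 0 - X ω L with hSdef
  set S' : Ω → ℝ := fun ω => Y ω 0 - Y ω L with hS'def
  set D : Ω → ℝ := fun ω => h ω 0 - h ω L with hDdef
  have hSm : Measurable S := hX0.sub hXL
  have hS'm : Measurable S' := hY0.sub hYL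
  have hDm : Measurable D := hh0.sub hhL
  set ν : Measure ℝ := μ.map D with hνdef
  set ζ : Measure ℝ := μ.map (fun ω => h ω 0) with hζdef
  haveI : IsProbabilityMeasure ν := Measure.isProbabilityMeasure_map hDm.aemeasurable
  haveI : IsProbabilityMeasure ζ := Measure.isProbabilityMeasure_map hh0.aemeasurable
  -- symmetry of ν
  have hindep0L : IndepFun (fun ω => h ω 0) (fun ω => h ω L) μ := hindep.indepFun hL0
  have hmap2 : μ.map (fun ω => (h ω 0, h ω L)) = ζ.prod ζ := by
    rw [(indepFun_iff_map_prod_eq_prod_map_map hh0.aemeasurable hhL.aemeasurable).mp hindep0L,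
      hident L]
  have hDν : ν = (ζ.prod ζ).map (fun p : ℝ × ℝ => p.1 - p.2) := by
    rw [← hmap2, Measure.map_map (g := (fun p : ℝ × ℝ => p.1 - p.2)) (measurable_fst.sub measurable_snd : Measurable fun p : ℝ × ℝ => p.1 - p.2) (hh0.prodMk hhL)]
    rfl
  have hsym : ν.map (fun x : ℝ => -x) = ν := by
    rw [hDν, Measure.map_map (g := fun x : ℝ => -x) (f := (fun p : ℝ × ℝ => p.1 - p.2)) measurable_neg (measurable_fst.sub measurable_snd : Measurable fun p : ℝ × ℝ => p.1 - p.2)]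
    have h1 : ((fun x : ℝ => -x) ∘ fun p : ℝ × ℝ => p.1 - p.2)
        = (fun p : ℝ × ℝ => p.1 - p.2) ∘ Prod.swap := by
      funext p; simp [neg_sub]
    rw [h1, ← Measure.map_map (g := (fun p : ℝ × ℝ => p.1 - p.2)) (measurable_fst.sub measurable_snd : Measurable fun p : ℝ × ℝ => p.1 - p.2) measurable_swap,
      Measure.prod_swap]
  -- ν has no atom at 0
  have hζatom : ∀ x : ℝ, ζ {x} = 0 := fun x => hac (Real.volume_singleton)
  have hν0 : ν {0} = 0 := by
    rw [hDν, Measure.map_apply (f := (fun p : ℝ × ℝ => p.1 - p.2)) (measurable_fst.sub measurable_snd : Measurable fun p : ℝ × ℝ => p.1 - p.2) (measurableSet_singleton 0)]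
    have hpre : (fun p : ℝ × ℝ => p.1 - p.2) ⁻¹' {0} = {p : ℝ × ℝ | p.1 = p.2} := by
      ext p; simp [sub_eq_zero]
    rw [hpre, Measure.prod_apply (measurableSet_eq_fun measurable_fst measurable_snd)]
    simp [Set.preimage, eq_comm, hζatom]
  -- positive mass above some ε > 0
  have hIoiIio : ν (Ioi 0) = ν (Iio 0) := by
    conv_lhs => rw [← hsym]
    rw [Measure.map_apply measurable_neg measurableSet_Ioi]
    congr 1
    ext x; simp only [mem_preimage, mem_Ioi, mem_Iio]
    constructor <;> intro <;> linarith
  have hIoipos : 0 < ν (Ioi 0) := by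
    by_contra hcon
    push_neg at hcon
    have h0 : ν (Ioi 0) = 0 := le_antisymm hcon zero_le
    have hsplit : ν (Iio 0) + ν (Ici 0) = 1 := by
      have := measure_add_measure_compl (μ := ν) (measurableSet_Iio (a := (0:ℝ)))
      rwa [compl_Iio, measure_univ] at this
    have hIci : ν (Ici 0) = ν (Ioi 0) := by
      rw [← Set.Ioi_insert, Set.insert_eq,
        measure_union (Set.disjoint_singleton_left.mpr (by simp)) measurableSet_Ioi, hν0, zero_add]
    have hIio0 : ν (Iio 0) = 0 := hIoiIio.symm.trans h0
    rw [hIio0, hIci, h0] at hsplit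
    simp at hsplit
  -- find epsilon
  have hexeps : ∃ ε : ℝ, 0 < ε ∧ 0 < ν (Ici ε) := by
    by_contra hcon
    push_neg at hcon
    have hnull : ∀ n : ℕ, ν (Ici (((n : ℝ) + 1)⁻¹)) = 0 := by
      intro n
      have := hcon (((n : ℝ) + 1)⁻¹) (by positivity)
      exact le_antisymm this zero_le
    have hcover : Ioi (0:ℝ) ⊆ ⋃ n : ℕ, Ici (((n : ℝ) + 1)⁻¹) := by
      intro x hx
      have hx0 : (0:ℝ) < x := hx
      obtain ⟨n, hn⟩ := exists_nat_gt x⁻¹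
      refine mem_iUnion.mpr ⟨n, ?_⟩
      have h1 : x⁻¹ < (n : ℝ) + 1 := by linarith
      have h2 : ((n : ℝ) + 1)⁻¹ < x := by
        have := inv_strictAnti₀ (by positivity : (0:ℝ) < x⁻¹) h1
        rwa [inv_inv] at this
      exact le_of_lt h2
    have : ν (Ioi 0) = 0 :=
      le_antisymm (le_trans (measure_mono hcover) (le_of_eq (measure_iUnion_null hnull))) zero_le
    exact hIoipos.ne' this
  obtain ⟨ε, hε, hp⟩ := hexeps
  -- the tail function H
  set H : ℝ → ℝ≥0∞ := fun t => μ {ω | t < S ω} with hHdef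
  have hHanti : Antitone H := fun s t hst =>
    measure_mono (fun ω hω => lt_of_le_of_lt hst hω)
  have hSnonneg : ∀ᵐ ω ∂μ, 0 ≤ S ω := by
    filter_upwards [hord] with ω hω
    have := hω (Fin.zero_le L)
    simp only [hSdef]
    linarith
  have hHneg : ∀ t, t < 0 → H t = 1 := by
    intro t ht
    have hae : ∀ᵐ ω ∂μ, t < S ω := by
      filter_upwards [hSnonneg] with ω hω; linarith
    have hc : μ {ω | ¬ t < S ω} = 0 := by
      rw [← ae_iff]; exact hae
    have hmc := measure_add_measure_compl (μ := μ) (s := {ω | t < S ω})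
      (measurableSet_lt measurable_const hSm)
    rw [measure_univ] at hmc
    have hcompl : {ω | t < S ω}ᶜ = {ω | ¬ t < S ω} := rfl
    rw [hcompl, hc, add_zero] at hmc
    exact hmc
  -- tendsto 0
  have hH0 : Tendsto H atTop (nhds 0) := by
    rw [ENNReal.tendsto_nhds_zero]
    intro δ hδ
    have hseq : Tendsto (fun n : ℕ => H n) atTop (nhds 0) := by
      have h1 : Tendsto (μ ∘ fun n : ℕ => {ω | (n : ℝ) < S ω}) atTop
          (nhds (μ (⋂ n : ℕ, {ω | (n : ℝ) < S ω}))) := by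
        refine tendsto_measure_iInter_atTop
          (fun n => (measurableSet_lt measurable_const hSm).nullMeasurableSet) ?_
          ⟨0, measure_ne_top μ _⟩
        intro i j hij ω hω
        simp only [mem_setOf_eq] at hω ⊢
        have : (i : ℝ) ≤ (j : ℝ) := Nat.cast_le.mpr hij
        linarith
      have h2 : (⋂ n : ℕ, {ω | (n : ℝ) < S ω}) = ∅ := by
        ext ω
        simp only [mem_iInter, mem_setOf_eq, mem_empty_iff_false, iff_false, not_forall, not_lt]
        obtain ⟨n, hn⟩ := exists_nat_gt (S ω)
        exact ⟨n, hn.le⟩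
      rw [h2, measure_empty] at h1
      exact h1
    obtain ⟨n, hn⟩ := (hseq.eventually_lt_const hδ).exists
    filter_upwards [eventually_ge_atTop ((n : ℕ) : ℝ)] with t' ht'
    exact le_trans (hHanti ht') hn.le
  -- quasi-stationarity: S and S' have the same law
  have hlawSS' : ∀ t : ℝ, μ {ω | t < S' ω} = μ {ω | t < S ω} := by
    intro t
    have hgapXm : Measurable fun ω (i : Fin (m + 1)) => X ω i.castSucc - X ω i.succ :=
      measurable_pi_lambda _ fun i =>
        ((measurable_pi_apply _).comp hXm).sub ((measurable_pi_apply _).comp hXm)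
    have hgapYm : Measurable fun ω (i : Fin (m + 1)) => Y ω i.castSucc - Y ω i.succ :=
      measurable_pi_lambda _ fun i =>
        ((measurable_pi_apply _).comp hYm).sub ((measurable_pi_apply _).comp hYm)
    have hsumset : MeasurableSet {v : Fin (m + 1) → ℝ | t < ∑ i, v i} :=
      measurableSet_lt measurable_const (Finset.measurable_sum _ fun i _ => measurable_pi_apply i)
    have hX : {ω | t < S ω}
        = (fun ω (i : Fin (m + 1)) => X ω i.castSucc - X ω i.succ) ⁻¹' {v | t < ∑ i, v i} := by
      ext ω
      simp only [mem_setOf_eq, mem_preimage, hSdef]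
      rw [telescope_fin (m + 1) (X ω)]
    have hY : {ω | t < S' ω}
        = (fun ω (i : Fin (m + 1)) => Y ω i.castSucc - Y ω i.succ) ⁻¹' {v | t < ∑ i, v i} := by
      ext ω
      simp only [mem_setOf_eq, mem_preimage, hS'def]
      rw [telescope_fin (m + 1) (Y ω)]
    rw [hX, hY, ← Measure.map_apply hgapXm hsumset, ← Measure.map_apply hgapYm hsumset, hqs]
  -- pointwise domination S + D ≤ S'
  have hSS' : ∀ᵐ ω ∂μ, S ω + D ω ≤ S' ω := by
    filter_upwards [hreord] with ω hω
    obtain ⟨hYanti, σ, hσ⟩ := hω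
    have h1 : X ω 0 + h ω 0 ≤ Y ω 0 := by
      have he := hσ (σ.symm 0)
      rw [Equiv.apply_symm_apply] at he
      calc X ω 0 + h ω 0 = Y ω (σ.symm 0) := he.symm
        _ ≤ Y ω 0 := hYanti (Fin.zero_le _)
    have h2 : Y ω L ≤ X ω L + h ω L := by
      have he := hσ (σ.symm L)
      rw [Equiv.apply_symm_apply] at he
      calc Y ω L ≤ Y ω (σ.symm L) := hYanti (Fin.le_last _)
        _ = X ω L + h ω L := he
    simp only [hSdef, hS'def, hDdef]
    linarith
  -- independence of D and S
  have hindepDS : IndepFun D S μ := by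
    have hφS : Measurable fun v : Fin (m + 2) → ℝ => v 0 - v L :=
      (measurable_pi_apply _).sub (measurable_pi_apply _)
    exact (hXh.comp hφS hφS).symm
  have hjoint : μ.map (fun ω => (D ω, S ω)) = ν.prod (μ.map S) :=
    (indepFun_iff_map_prod_eq_prod_map_map hDm.aemeasurable hSm.aemeasurable).mp hindepDS
  -- superharmonicity
  have hHsup : ∀ t, ∫⁻ d, H (t - d) ∂ν ≤ H t := by
    intro t
    have hset : MeasurableSet {p : ℝ × ℝ | t < p.2 + p.1} :=
      measurableSet_lt measurable_const (measurable_snd.add measurable_fst)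
    have hconv : μ {ω | t < S ω + D ω} = ∫⁻ d, H (t - d) ∂ν := by
      have hpre : {ω | t < S ω + D ω} = (fun ω => (D ω, S ω)) ⁻¹' {p | t < p.2 + p.1} := by
        ext ω; simp only [mem_setOf_eq, mem_preimage]
      rw [hpre, ← Measure.map_apply (hDm.prodMk hSm) hset, hjoint, Measure.prod_apply hset]
      refine lintegral_congr fun d => ?_
      have hslice : (Prod.mk d ⁻¹' {p : ℝ × ℝ | t < p.2 + p.1}) = Ioi (t - d) := by
        ext s
        simp only [mem_preimage, mem_setOf_eq, mem_Ioi]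
        constructor <;> intro <;> linarith
      rw [hslice, Measure.map_apply hSm measurableSet_Ioi]
      rfl
    have hmono : μ {ω | t < S ω + D ω} ≤ μ {ω | t < S' ω} := by
      refine measure_mono_ae ?_
      filter_upwards [hSS'] with ω hω ht
      exact lt_of_lt_of_le ht hω
    calc ∫⁻ d, H (t - d) ∂ν = μ {ω | t < S ω + D ω} := hconv.symm
      _ ≤ μ {ω | t < S' ω} := hmono
      _ = H t := hlawSS' t
  exact core_false ν hsym ε hε hp H hHanti hHneg hHsup hH0
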